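/- arXiv:1505.01261 — 2 statements merged into one kernel-verified Lean document; each statement's English description precedes it below -/
import Mathlib

section
/- Let K ⊆ L be a finite separable extension of fields and c₀ ∈ L an element generating the extension, i.e. L = K(c₀). Let x ∈ L[[T]] be any formal power series with constant coefficient c₀. If a power series ω ∈ L[[T]] satisfies Tr_{L/K}(coeff_i(xⁿ · ω)) = 0 for all natural numbers n ≥ 0 and i ≥ 0, then ω = 0. -/
/-- Let `L/K` be a finite separable field extension generated by a primitive element `c₀`,
and let `x ∈ L[[T]]` be a power series with constant coefficient `c₀`. If a power series
`ω ∈ L[[T]]` satisfies `Tr_{L/K}(coeff_i(xⁿ · ω)) = 0` for all `n, i ≥ 0`, then `ω = 0`. -/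
theorem powerSeries_eq_zero_of_trace_coeff_pow_mul_eq_zero
    (K L : Type*) [Field K] [Field L] [Algebra K L] [FiniteDimensional K L]
    [Algebra.IsSeparable K L] (c₀ : L)
    (hgen : IntermediateField.adjoin K {c₀} = ⊤)
    (x ω : PowerSeries L)
    (hx : PowerSeries.constantCoeff x = c₀)
    (h : ∀ n i : ℕ, Algebra.trace K L (PowerSeries.coeff i (x ^ n * ω)) = 0) :
    ω = 0 := by
  -- The K-span of powers of c₀ is all of L.
  have hint : IsIntegral K c₀ := Algebra.IsIntegral.isIntegral c₀
  have hadj : Algebra.adjoin K ({c₀} : Set L) = ⊤ := by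
    have := IntermediateField.adjoin_simple_toSubalgebra_of_isAlgebraic hint.isAlgebraic
    rw [hgen, IntermediateField.top_toSubalgebra] at this
    exact this.symm
  have hspan : Submodule.span K ((Submonoid.closure ({c₀} : Set L) : Submonoid L) : Set L)
      = ⊤ := by
    rw [← Algebra.adjoin_eq_span, hadj]
    rfl
  have key : ∀ i, PowerSeries.coeff i ω = 0 := by
    intro i
    induction i using Nat.strong_induction_on with
    | _ i ih =>
      set a := PowerSeries.coeff i ω with ha
      have hc : ∀ n : ℕ, PowerSeries.coeff i (x ^ n * ω) = c₀ ^ n * a := by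
        intro n
        rw [PowerSeries.coeff_mul]
        rw [Finset.sum_eq_single (0, i)]
        · simp [← hx, ← map_pow, ha]
        · rintro ⟨p, q⟩ hpq hne
          have hsum : p + q = i := Finset.HasAntidiagonal.mem_antidiagonal.mp hpq
          have hq : q < i := by
            by_contra h'
            push_neg at h'
            have hqi : q = i := le_antisymm (by omega) h'
            have hp : p = 0 := by omega
            exact hne (by simp [hp, hqi])
          rw [ih q hq, mul_zero]
        · intro hni
          exact absurd (Finset.HasAntidiagonal.mem_antidiagonal.mpr (by simp)) hni
      have hpow : ∀ n : ℕ, Algebra.trace K L (c₀ ^ n * a) = 0 := by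
        intro n
        rw [← hc n]
        exact h n i
      have hall : ∀ y : L, Algebra.trace K L (y * a) = 0 := by
        intro y
        have hy : y ∈ Submodule.span K
            ((Submonoid.closure ({c₀} : Set L) : Submonoid L) : Set L) := by
          rw [hspan]; trivial
        induction hy using Submodule.span_induction with
        | mem z hz =>
          rw [Submonoid.closure_singleton_eq] at hz
          obtain ⟨n, rfl⟩ := hz
          exact hpow n
        | zero => simp
        | add u v _ _ hu hv => rw [add_mul, map_add, hu, hv, add_zero]
        | smul c u _ hu => rw [Algebra.smul_def, mul_assoc, ← Algebra.smul_def,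
            map_smul, hu, smul_zero]
      have := (traceForm_nondegenerate K L).1 a (fun y => by
        rw [Algebra.traceForm_apply, mul_comm]; exact hall y)
      exact this
  ext i
  simp [key i]
end

section
/- Let B be a Dedekind domain with fraction field F, let E/F be a finite Galois extension with Galois group G, and let A be the integral closure of B in E. Let 𝔭 be a nonzero prime ideal of B and fix a prime ideal 𝔓₀ of A lying over 𝔭. Suppose that to each prime 𝔓 of A lying over 𝔭 is assigned an element x_𝔓 ∈ E, and that for every g ∈ E one has Σ_{τ ∈ G} τ(g · x_{τ⁻¹(𝔓₀)}) = 0 in E, where τ⁻¹(𝔓₀) denotes the image of 𝔓₀ under the action of τ⁻¹ on the primes of A over 𝔭. Then x_𝔓 = 0 for every prime 𝔓 of A over 𝔭. -/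
open scoped BigOperators

/-- Let `B` be a Dedekind domain with fraction field `F`, let `E/F` be a finite Galois
extension, and let `A` be the integral closure of `B` in `E`.  Fix a nonzero prime `𝔭` of
`B` and a prime `𝔓₀` of `A` over `𝔭`.  Suppose each prime `𝔓` of `A` over `𝔭` is assigned
an element `x 𝔓 ∈ E` such that for every `g ∈ E` one has
`Σ_{τ ∈ Gal(E/F)} τ (g · x (τ⁻¹ 𝔓₀)) = 0`, where `τ⁻¹ 𝔓₀ = comap τ 𝔓₀` is the image of
`𝔓₀` under the Galois action (via the restriction of `τ` to `A`).  Then `x 𝔓 = 0` for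
every prime `𝔓` of `A` over `𝔭`. -/
theorem eq_zero_of_sum_galois_conjugates_eq_zero
    (B : Type*) [CommRing B] [IsDomain B] [IsDedekindDomain B]
    (F : Type*) [Field F] [Algebra B F] [IsFractionRing B F]
    (E : Type*) [Field E] [Algebra F E] [FiniteDimensional F E] [IsGalois F E]
    (A : Type*) [CommRing A] [Algebra B A] [Algebra A E] [Algebra B E]
    [IsScalarTower B A E] [IsScalarTower B F E] [IsIntegralClosure A B E]
    (𝔭 : Ideal B) (hp : 𝔭.IsPrime) (hp0 : 𝔭 ≠ ⊥)
    (𝔓₀ : Ideal A) (hP0 : 𝔓₀.IsPrime) (hP0over : Ideal.comap (algebraMap B A) 𝔓₀ = 𝔭)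
    (x : Ideal A → E)
    (hsum : ∀ g : E,
      ∑ τ : E ≃ₐ[F] E, τ (g * x (Ideal.comap (galRestrict B F E A τ) 𝔓₀)) = 0) :
    ∀ 𝔓 : Ideal A, 𝔓.IsPrime → Ideal.comap (algebraMap B A) 𝔓 = 𝔭 → x 𝔓 = 0 := by
  classical
  have hAE : Function.Injective (algebraMap A E) :=
    IsIntegralClosure.algebraMap_injective A B E
  have : IsDomain A := (IsIntegralClosure.algebraMap_injective A B E).isDomain _
  have hBA : Function.Injective (algebraMap B A) := by
    have h1 : Function.Injective (algebraMap B E) := by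
      rw [IsScalarTower.algebraMap_eq B F E]
      exact (algebraMap F E).injective.comp (IsFractionRing.injective B F)
    rw [IsScalarTower.algebraMap_eq B A E] at h1
    exact Function.Injective.of_comp h1
  have : IsDedekindDomain A := IsIntegralClosure.isDedekindDomain B F E A
  -- Step 1: for every `τ`, `x (τ⁻¹ 𝔓₀) = 0`, by linear independence of characters.
  have key : ∀ τ : E ≃ₐ[F] E, x (Ideal.comap (galRestrict B F E A τ) 𝔓₀) = 0 := by
    have li : LinearIndependent E (fun (f : E ≃ₐ[F] E) => (f : E → E)) :=
      LinearIndependent.comp (ι' := E ≃ₐ[F] E)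
        (linearIndependent_monoidHom E E) (fun f => f)
        (fun f g h => by ext a; exact DFunLike.ext_iff.1 h a)
    intro τ
    have h := linearIndependent_iff'.1 li Finset.univ
      (fun σ => σ (x (Ideal.comap (galRestrict B F E A σ) 𝔓₀)))
      (by
        funext g
        have := hsum g
        simpa [Finset.sum_apply, mul_comm, map_mul] using this)
      τ (Finset.mem_univ τ)
    have h0 : τ (x (Ideal.comap (galRestrict B F E A τ) 𝔓₀)) = 0 := h
    exact τ.injective (h0.trans (map_zero τ).symm)
  -- Step 2: the Galois group acts transitively on primes over `𝔭`.
  intro 𝔓 hP hPover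
  -- It suffices to find `σ` with `comap (galRestrict σ) 𝔓₀ = 𝔓`.
  suffices htr : ∃ σ : E ≃ₐ[F] E, Ideal.comap (galRestrict B F E A σ) 𝔓₀ = 𝔓 by
    obtain ⟨σ, hσ⟩ := htr
    rw [← hσ]; exact key σ
  by_contra hne
  push_neg at hne
  set f : (E ≃ₐ[F] E) → Ideal A := fun σ => Ideal.comap (galRestrict B F E A σ) 𝔓₀ with hf
  have hfprime : ∀ σ, (f σ).IsPrime := fun σ => Ideal.IsPrime.comap _
  have hPbot : 𝔓 ≠ ⊥ := by
    intro h
    apply hp0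
    rw [← hPover, h]
    ext b
    simp [Ideal.mem_comap, map_eq_zero_iff _ hBA]
  have hPmax : 𝔓.IsMaximal := Ideal.IsPrime.isMaximal hP hPbot
  have hnotle : ∀ σ, ¬ 𝔓 ≤ f σ := by
    intro σ hle
    exact hne σ ((hPmax.eq_of_le (hfprime σ).ne_top hle).symm)
  -- prime avoidance: pick `a ∈ 𝔓` avoiding all conjugates of `𝔓₀`
  have hnotsub : ¬ ((𝔓 : Set A) ⊆ ⋃ σ ∈ (Finset.univ : Finset (E ≃ₐ[F] E)), ↑(f σ)) := by
    intro hsub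
    obtain ⟨σ, -, hle⟩ := (Ideal.subset_union_prime 1 1 (fun σ _ _ _ => hfprime σ)).1 hsub
    exact hnotle σ hle
  obtain ⟨a, haP, haU⟩ := Set.not_subset.1 hnotsub
  -- the norm of `a` lies in `𝔓 ∩ B = 𝔭 ⊆ 𝔓₀`
  have hisep : Algebra.IsSeparable F E := IsGalois.to_isSeparable
  have hIC : IsIntegrallyClosed B := inferInstance
  have hnorm := prod_galRestrict_eq_norm B F E A a
  set b : B := IsIntegralClosure.mk' (R := B) B (Algebra.norm F <| algebraMap A E a)
      (Algebra.isIntegral_norm F (IsIntegralClosure.isIntegral B E a).algebraMap) with hb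
  have hprodP : (∏ σ : E ≃ₐ[F] E, galRestrict B F E A σ a) ∈ 𝔓 := by
    rw [← Finset.prod_erase_mul _ _ (Finset.mem_univ 1)]
    exact Ideal.mul_mem_left _ _ (by simpa using haP)
  have hbp : b ∈ 𝔭 := by
    rw [← hPover, Ideal.mem_comap, ← hnorm]
    exact hprodP
  have hprodP0 : (∏ σ : E ≃ₐ[F] E, galRestrict B F E A σ a) ∈ 𝔓₀ := by
    rw [hnorm]
    rw [← hP0over] at hbp
    exact hbp
  obtain ⟨σ, -, hσ⟩ := (Ideal.IsPrime.prod_mem_iff (hp := hP0)).1 hprodP0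
  apply haU
  exact Set.mem_biUnion (Finset.mem_univ σ) (by simpa [hf, Ideal.mem_comap] using hσ)
end
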